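/- Let $k \ge 1$, let $F \in \mathbb{C}[[X]]$ be Gevrey of order $1/k$, and let $G \in \mathbb{C}[[X]]$ be a convergent power series with $G(0)=0$ of order $\nu := \mathrm{ord}(G) > 0$. Then the composite series $F \circ G$ is Gevrey of order $1/(\nu k)$. -/

import Mathlib

/-- A power series is Gevrey of order `s` if its coefficients satisfy
`|a_n| ≤ C R^n Γ(ns + 1)`. -/
def Gevrey (s : ℝ) (F : PowerSeries ℂ) : Prop :=
  ∃ C R : ℝ, 0 < C ∧ 0 < R ∧
    ∀ n : ℕ, ‖PowerSeries.coeff n F‖ ≤ C * R ^ n * Real.Gamma (n * s + 1)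

/-- A power series is convergent if it converges absolutely on some disc. -/
def PSConvergent (G : PowerSeries ℂ) : Prop :=
  ∃ r : ℝ, 0 < r ∧ Summable fun n : ℕ => ‖PowerSeries.coeff n G‖ * r ^ n

/-- Formal composition `F ∘ G` of one-variable power series, for `G` with zero constant
term: the `n`-th coefficient only receives contributions from `G^d` with `d ≤ n`. -/
noncomputable def psComp (F G : PowerSeries ℂ) : PowerSeries ℂ :=
  PowerSeries.mk fun n =>
    ∑ d ∈ Finset.range (n + 1), PowerSeries.coeff d F * PowerSeries.coeff n (G ^ d)

lemma gamma_two' : Real.Gamma 2 = 1 := by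
  rw [show (2:ℝ) = (1:ℕ)+1 by norm_num, Real.Gamma_nat_eq_factorial]; norm_num

lemma gamma_three' : Real.Gamma 3 = 2 := by
  rw [show (3:ℝ) = (2:ℕ)+1 by norm_num, Real.Gamma_nat_eq_factorial]; norm_num

lemma gamma_comp {x y : ℝ} (hx : 0 ≤ x) (hxy : x ≤ y) :
    Real.Gamma (x + 1) ≤ 4 * Real.Gamma (y + 1) := by
  have hmono := Real.Gamma_strictMonoOn_Ici.monotoneOn
  have hy : 0 ≤ y := le_trans hx hxy
  have hGy : 0 < Real.Gamma (y + 1) := Real.Gamma_pos_of_pos (by linarith)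
  have hlow : (1:ℝ)/2 ≤ Real.Gamma (y + 1) := by
    rcases le_or_gt 1 y with h | h
    · have := hmono (show (2:ℝ) ∈ Set.Ici 2 by norm_num)
        (show y + 1 ∈ Set.Ici (2:ℝ) by simp [Set.mem_Ici]; linarith)
        (by linarith)
      rw [gamma_two'] at this; linarith
    · have h2 : Real.Gamma (y + 1 + 1) = (y+1) * Real.Gamma (y + 1) :=
        Real.Gamma_add_one (by linarith)
      have h3 : Real.Gamma 2 ≤ Real.Gamma (y + 1 + 1) :=
        hmono (by norm_num) (by simp [Set.mem_Ici]; linarith) (by linarith)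
      rw [gamma_two'] at h3
      nlinarith [hGy]
  rcases le_or_gt 1 x with h | h
  · have hle : Real.Gamma (x+1) ≤ Real.Gamma (y+1) :=
      hmono (by simp [Set.mem_Ici]; linarith) (by simp [Set.mem_Ici]; linarith) (by linarith)
    linarith
  · have hGx : 0 < Real.Gamma (x + 1) := Real.Gamma_pos_of_pos (by linarith)
    have h2 : Real.Gamma (x + 1 + 1) = (x+1) * Real.Gamma (x + 1) :=
      Real.Gamma_add_one (by linarith)
    have h3 : Real.Gamma (x + 1 + 1) ≤ Real.Gamma 3 :=
      hmono (by simp [Set.mem_Ici]; linarith) (by norm_num) (by linarith)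
    rw [gamma_three'] at h3
    nlinarith

open PowerSeries Finset

lemma pow_coeff_vanish (G : PowerSeries ℂ) (ν : ℕ)
    (hlow : ∀ m < ν, PowerSeries.coeff m G = 0) :
    ∀ d n, n < ν * d → PowerSeries.coeff n (G ^ d) = 0 := by
  intro d
  induction d with
  | zero => intro n hn; omega
  | succ d ih =>
    intro n hn
    rw [pow_succ', PowerSeries.coeff_mul]
    apply Finset.sum_eq_zero
    intro p hp
    rw [Finset.HasAntidiagonal.mem_antidiagonal] at hp
    by_cases h1 : p.1 < ν
    · rw [hlow p.1 h1, zero_mul]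
    · have hexp : ν * (d + 1) = ν * d + ν := by ring
      rw [ih p.2 (by omega), mul_zero]

lemma pow_coeff_bound (G : PowerSeries ℂ) (r : ℝ) (hr0 : 0 < r) (hr1 : r ≤ 1)
    (hsum : Summable fun m : ℕ => ‖PowerSeries.coeff m G‖ * r ^ m) :
    ∀ d n, ‖PowerSeries.coeff n (G ^ d)‖ * r ^ n ≤
      (∑' m : ℕ, ‖PowerSeries.coeff m G‖ * r ^ m) ^ d := by
  set S := ∑' m : ℕ, ‖PowerSeries.coeff m G‖ * r ^ m with hS
  have hS0 : 0 ≤ S := tsum_nonneg fun m => by positivity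
  intro d
  induction d with
  | zero =>
    intro n
    rw [pow_zero, pow_zero, PowerSeries.coeff_one]
    rcases Nat.eq_zero_or_pos n with h | h
    · simp [h]
    · simp [Nat.pos_iff_ne_zero.mp h]
  | succ d ih =>
    intro n
    rw [pow_succ', PowerSeries.coeff_mul]
    calc ‖∑ p ∈ antidiagonal n, PowerSeries.coeff p.1 G *
            PowerSeries.coeff p.2 (G ^ d)‖ * r ^ n
        ≤ (∑ p ∈ antidiagonal n, ‖PowerSeries.coeff p.1 G *
            PowerSeries.coeff p.2 (G ^ d)‖) * r ^ n := by
          gcongr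
          exact norm_sum_le _ _
      _ = ∑ p ∈ antidiagonal n, (‖PowerSeries.coeff p.1 G‖ * r ^ p.1) *
            (‖PowerSeries.coeff p.2 (G ^ d)‖ * r ^ p.2) := by
          rw [Finset.sum_mul]
          apply Finset.sum_congr rfl
          intro p hp
          rw [Finset.HasAntidiagonal.mem_antidiagonal] at hp
          rw [norm_mul, ← hp, pow_add]
          ring
      _ ≤ ∑ p ∈ antidiagonal n, (‖PowerSeries.coeff p.1 G‖ * r ^ p.1) * S ^ d := by
          apply Finset.sum_le_sum
          intro p _
          exact mul_le_mul_of_nonneg_left (ih p.2) (by positivity)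
      _ = (∑ p ∈ antidiagonal n, ‖PowerSeries.coeff p.1 G‖ * r ^ p.1) * S ^ d := by
          rw [Finset.sum_mul]
      _ ≤ S * S ^ d := by
          apply mul_le_mul_of_nonneg_right _ (by positivity)
          have : ∑ p ∈ antidiagonal n, ‖PowerSeries.coeff p.1 G‖ * r ^ p.1
              = ∑ i ∈ Finset.range (n + 1), ‖PowerSeries.coeff i G‖ * r ^ i := by
            rw [Finset.Nat.sum_antidiagonal_eq_sum_range_succ_mk]
          rw [this]
          exact Summable.sum_le_tsum _ (fun m _ => by positivity) hsum
      _ = S ^ (d + 1) := by ring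

/-- if `F` is Gevrey of order `1/k` and `G` is convergent with `G(0)=0`
of order `ν > 0`, then `F ∘ G` is Gevrey of order `1/(νk)`. -/
theorem stmt12 (k : ℝ) (hk : 1 ≤ k) (F G : PowerSeries ℂ)
    (hF : Gevrey (1 / k) F) (hG : PSConvergent G)
    (hG0 : PowerSeries.constantCoeff G = 0)
    (ν : ℕ) (hνpos : 0 < ν) (hν : PowerSeries.coeff ν G ≠ 0)
    (hlow : ∀ m < ν, PowerSeries.coeff m G = 0) :
    Gevrey (1 / (ν * k)) (psComp F G) := by
  obtain ⟨C, R, hC, hR, hFb⟩ := hF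
  obtain ⟨r0, hr00, hsum0⟩ := hG
  have hk0 : (0:ℝ) < k := lt_of_lt_of_le one_pos hk
  have hν' : (0:ℝ) < (ν:ℝ) := by exact_mod_cast hνpos
  set r : ℝ := min r0 1 with hrdef
  have hr0 : 0 < r := lt_min hr00 one_pos
  have hr1 : r ≤ 1 := min_le_right _ _
  have hsum : Summable fun m : ℕ => ‖PowerSeries.coeff m G‖ * r ^ m := by
    apply Summable.of_nonneg_of_le (fun m => by positivity) _ hsum0
    intro m
    apply mul_le_mul_of_nonneg_left _ (by positivity)
    exact pow_le_pow_left₀ hr0.le (min_le_left _ _) m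
  set S : ℝ := ∑' m : ℕ, ‖PowerSeries.coeff m G‖ * r ^ m with hSdef
  have hS0 : 0 ≤ S := tsum_nonneg fun m => by positivity
  set M : ℝ := max 1 (R * S) with hMdef
  have hM1 : (1:ℝ) ≤ M := le_max_left _ _
  have hM0 : (0:ℝ) < M := lt_of_lt_of_le one_pos hM1
  refine ⟨4 * C, 2 * M / r, by positivity, by positivity, fun n => ?_⟩
  set Γn : ℝ := Real.Gamma ((n:ℝ) * (1 / ((ν:ℝ) * k)) + 1) with hΓdef
  have hΓpos : 0 < Γn := Real.Gamma_pos_of_pos (by positivity)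
  have hcoeff : PowerSeries.coeff n (psComp F G) =
      ∑ d ∈ Finset.range (n + 1), PowerSeries.coeff d F * PowerSeries.coeff n (G ^ d) := by
    simp [psComp, PowerSeries.coeff_mk]
  set T : ℝ := 4 * C * M ^ n * (1 / r) ^ n * Γn with hTdef
  have hterm : ∀ d ∈ Finset.range (n + 1),
      ‖PowerSeries.coeff d F * PowerSeries.coeff n (G ^ d)‖ ≤ T := by
    intro d _
    by_cases hd : ν * d ≤ n
    · have hdn : d ≤ n := le_trans (by calc d = 1 * d := (one_mul d).symm
        _ ≤ ν * d := Nat.mul_le_mul_right d hνpos) hd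
      have hb : ‖PowerSeries.coeff n (G ^ d)‖ ≤ S ^ d * (1 / r) ^ n := by
        have h := pow_coeff_bound G r hr0 hr1 hsum d n
        have hrn : (0:ℝ) < r ^ n := by positivity
        rw [one_div, inv_pow, ← div_eq_mul_inv, le_div_iff₀ hrn]
        exact h
      have hxy : (d:ℝ) * (1 / k) ≤ (n:ℝ) * (1 / ((ν:ℝ) * k)) := by
        rw [mul_one_div, mul_one_div, div_le_div_iff₀ hk0 (by positivity)]
        have hcast : (ν:ℝ) * (d:ℝ) ≤ (n:ℝ) := by exact_mod_cast hd
        nlinarith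
      have hg : Real.Gamma ((d:ℝ) * (1 / k) + 1) ≤ 4 * Γn := gamma_comp (by positivity) hxy
      have hRS : (R * S) ^ d ≤ M ^ n :=
        le_trans (pow_le_pow_left₀ (by positivity) (le_max_right _ _) d)
          (pow_le_pow_right₀ hM1 hdn)
      calc ‖PowerSeries.coeff d F * PowerSeries.coeff n (G ^ d)‖
          = ‖PowerSeries.coeff d F‖ *
            ‖PowerSeries.coeff n (G ^ d)‖ := norm_mul _ _
        _ ≤ (C * R ^ d * Real.Gamma ((d:ℝ) * (1 / k) + 1)) * (S ^ d * (1 / r) ^ n) := by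
            apply mul_le_mul (hFb d) hb (by positivity)
            have : 0 < Real.Gamma ((d:ℝ) * (1 / k) + 1) :=
              Real.Gamma_pos_of_pos (by positivity)
            positivity
        _ ≤ (C * R ^ d * (4 * Γn)) * (S ^ d * (1 / r) ^ n) := by
            gcongr
        _ = 4 * C * (R * S) ^ d * (1 / r) ^ n * Γn := by rw [mul_pow]; ring
        _ ≤ T := by rw [hTdef]; gcongr
    · have hb0 : PowerSeries.coeff n (G ^ d) = 0 :=
        pow_coeff_vanish G ν hlow d n (by omega)
      rw [hb0, mul_zero, norm_zero]
      positivity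
  calc ‖PowerSeries.coeff n (psComp F G)‖
      ≤ ∑ d ∈ Finset.range (n + 1),
          ‖PowerSeries.coeff d F * PowerSeries.coeff n (G ^ d)‖ := by
        rw [hcoeff]; exact norm_sum_le _ _
    _ ≤ ∑ _d ∈ Finset.range (n + 1), T := Finset.sum_le_sum hterm
    _ = (n + 1 : ℕ) * T := by rw [Finset.sum_const, Finset.card_range, nsmul_eq_mul]
    _ ≤ (2:ℝ) ^ n * T := by
        apply mul_le_mul_of_nonneg_right _ (by positivity)
        exact_mod_cast Nat.lt_two_pow_self (n := n)
    _ = 4 * C * (2 * M / r) ^ n * Γn := by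
        rw [hTdef]
        field_simp
        ring
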